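/- Let A₀ be a q×q real matrix and ω : [0,∞) → ℝ^q continuously differentiable with ω(0) = ω₀. If lim_{t→∞} (e^{A₀t}ω₀ − ω(t)) = 0 and the function t ↦ A₀e^{A₀t}ω₀ − ω̇(t) is uniformly continuous on [0,∞), then lim_{t→∞} (A₀ω(t) − ω̇(t)) = 0. -/

import Mathlib

open Matrix Filter NormedSpace

/-- Derivative of `t ↦ e^{tA} v`. -/
lemma hasDerivAt_exp_mulVec {q : ℕ} (A : Matrix (Fin q) (Fin q) ℝ) (v : Fin q → ℝ) (t : ℝ) :
    HasDerivAt (fun t : ℝ => (exp (t • A)).mulVec v)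
      (A.mulVec ((exp (t • A)).mulVec v)) t := by
  letI : SeminormedRing (Matrix (Fin q) (Fin q) ℝ) := Matrix.linftyOpSemiNormedRing
  letI : NormedRing (Matrix (Fin q) (Fin q) ℝ) := Matrix.linftyOpNormedRing
  letI : NormedAlgebra ℝ (Matrix (Fin q) (Fin q) ℝ) := Matrix.linftyOpNormedAlgebra
  have h := hasDerivAt_exp_smul_const' A t
  let L : Matrix (Fin q) (Fin q) ℝ →ₗ[ℝ] (Fin q → ℝ) :=
    { toFun := fun M => M.mulVec v
      map_add' := fun M N => Matrix.add_mulVec M N v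
      map_smul' := fun c M => by simp [Matrix.smul_mulVec] }
  have hL : HasDerivAt (fun u : ℝ => L (exp (u • A)))
      (L (A * exp (t • A))) t :=
    (L.toContinuousLinearMap.hasFDerivAt.comp_hasDerivAt t h)
  simpa [L, Matrix.mulVec_mulVec] using hL

/-- Barbalat's lemma. -/
lemma barbalat {E : Type*} [NormedAddCommGroup E] [NormedSpace ℝ E] [CompleteSpace E]
    (g f : ℝ → E) (L : E)
    (hg : ∀ t, HasDerivAt g (f t) t) (hf : Continuous f)
    (huc : UniformContinuousOn f (Set.Ici 0))
    (hgl : Tendsto g atTop (nhds L)) : Tendsto f atTop (nhds 0) := by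
  rw [NormedAddCommGroup.tendsto_nhds_zero]
  intro ε hε
  rw [Metric.uniformContinuousOn_iff] at huc
  obtain ⟨δ, hδ, hucd⟩ := huc (ε / 4) (by linarith)
  set d : ℝ := δ / 2 with hd
  have hd0 : 0 < d := by positivity
  obtain ⟨T, hT⟩ := Metric.tendsto_atTop.mp hgl (d * ε / 8) (by positivity)
  filter_upwards [eventually_ge_atTop (max T 0)] with t ht
  have ht0 : (0 : ℝ) ≤ t := le_trans (le_max_right _ _) ht
  have htT : T ≤ t := le_trans (le_max_left _ _) ht
  have htd : t ≤ t + d := by linarith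
  -- FTC
  have hint : ∫ s in t..(t + d), f s = g (t + d) - g t :=
    intervalIntegral.integral_eq_sub_of_hasDerivAt (fun x _ => hg x)
      (hf.intervalIntegrable _ _)
  have hsub : ∫ s in t..(t + d), (f s - f t) =
      (g (t + d) - g t) - d • f t := by
    rw [intervalIntegral.integral_sub (hf.intervalIntegrable _ _)
      (intervalIntegrable_const), hint, intervalIntegral.integral_const]
    congr 1
    ring_nf
  have hbound : ‖∫ s in t..(t + d), (f s - f t)‖ ≤ (ε / 4) * |(t + d) - t| := by
    apply intervalIntegral.norm_integral_le_of_norm_le_const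
    intro x hx
    rw [Set.uIoc_of_le htd] at hx
    have hx0 : (0 : ℝ) ≤ x := le_trans ht0 (le_of_lt hx.1)
    have hdist : dist x t < δ := by
      rw [Real.dist_eq, abs_of_nonneg (by linarith [hx.1.le])]
      have := hx.2
      simp only [hd] at *
      linarith
    have := hucd x hx0 t ht0 hdist
    rw [dist_eq_norm] at this
    exact this.le
  have habs : |(t + d) - t| = d := by rw [abs_of_nonneg (by linarith)]; ring
  have hAB : dist (g (t + d)) L < d * ε / 8 := hT _ (by linarith)
  have hA : dist (g t) L < d * ε / 8 := hT _ htT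
  have hgg : ‖g (t + d) - g t‖ < d * ε / 4 := by
    calc ‖g (t + d) - g t‖ ≤ dist (g (t + d)) L + dist (g t) L := by
          rw [← dist_eq_norm]; exact dist_triangle_right _ _ _
      _ < d * ε / 4 := by linarith
  have key : d * ‖f t‖ < d * ε := by
    have h1 : ‖d • f t‖ ≤ ‖g (t + d) - g t‖ + ‖∫ s in t..(t + d), (f s - f t)‖ := by
      have : d • f t = (g (t + d) - g t) - ∫ s in t..(t + d), (f s - f t) := by
        rw [hsub]; abel
      rw [this]
      exact norm_sub_le _ _
    have h2 : ‖d • f t‖ = d * ‖f t‖ := by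
      rw [norm_smul, Real.norm_eq_abs, abs_of_pos hd0]
    rw [h2] at h1
    rw [habs] at hbound
    nlinarith
  exact lt_of_mul_lt_mul_left key hd0.le

/-- If `e^{A₀t}ω₀ − ω(t) → 0` and `t ↦ A₀e^{A₀t}ω₀ − ω̇(t)` is uniformly
continuous on `[0,∞)`, then `A₀ω(t) − ω̇(t) → 0`. -/
theorem limit_A0omega_sub_deriv {q : ℕ}
    (A₀ : Matrix (Fin q) (Fin q) ℝ)
    (ω ω' : ℝ → (Fin q → ℝ)) (ω₀ : Fin q → ℝ) (hω₀ : ω 0 = ω₀)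
    (hderiv : ∀ t : ℝ, HasDerivAt ω (ω' t) t) (hcont : Continuous ω')
    (hlim : Tendsto (fun t : ℝ => (exp (t • A₀)).mulVec ω₀ - ω t) atTop (nhds 0))
    (huc : UniformContinuousOn
      (fun t : ℝ => A₀.mulVec ((exp (t • A₀)).mulVec ω₀) - ω' t) (Set.Ici 0)) :
    Tendsto (fun t : ℝ => A₀.mulVec (ω t) - ω' t) atTop (nhds 0) := by
  set g : ℝ → (Fin q → ℝ) := fun t => (exp (t • A₀)).mulVec ω₀ - ω t with hgdef
  set f : ℝ → (Fin q → ℝ) := fun t => A₀.mulVec ((exp (t • A₀)).mulVec ω₀) - ω' t with hfdef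
  have hmulVec_cont : Continuous (fun v : Fin q → ℝ => A₀.mulVec v) := by
    have := (Matrix.mulVecLin A₀).continuous_of_finiteDimensional
    exact this
  have hexp_cont : Continuous (fun t : ℝ => (exp (t • A₀)).mulVec ω₀) :=
    continuous_iff_continuousAt.mpr fun t => (hasDerivAt_exp_mulVec A₀ ω₀ t).continuousAt
  have hf_cont : Continuous f := (hmulVec_cont.comp hexp_cont).sub hcont
  have hg_deriv : ∀ t, HasDerivAt g (f t) t := fun t =>
    (hasDerivAt_exp_mulVec A₀ ω₀ t).sub (hderiv t)
  have hbarb : Tendsto f atTop (nhds 0) := barbalat g f 0 hg_deriv hf_cont huc hlim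
  have hcomp : Tendsto (fun t => A₀.mulVec (g t)) atTop (nhds 0) := by
    have := (hmulVec_cont.tendsto 0).comp hlim
    simpa [Matrix.mulVec_zero, Function.comp_def] using this
  have := hbarb.sub hcomp
  simp only [sub_zero] at this
  convert this using 2 with t
  simp only [hfdef, hgdef, Matrix.mulVec_sub]
  abel
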